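/- Let x be a zero-mean σ²-sub-Gaussian random vector in ℝ^d and let τ₁ > 0 satisfy P(|x_j| ≥ τ₁) ≤ 1/n² for all j ∈ [d] (for instance τ₁ = 2σ√(log n)). Define the coordinatewise shrunken vector x̃_j = sgn(x_j) min{|x_j|, τ₁}. Then for all j, l ∈ [d], the shrinkage bias of the covariance entries satisfies |E[x̃_j x̃_l] − E[x_j x_l]| ≤ C σ² / n for an absolute constant C. -/

import Mathlib

open MeasureTheory

noncomputable section

/-- A random variable `f` is sub-Gaussian with variance proxy `v` (zero-mean form). -/
def SubGMGF {Ω : Type*} [MeasurableSpace Ω] (μ : Measure Ω) (f : Ω → ℝ) (v : ℝ) : Prop :=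
  AEMeasurable f μ ∧ ∀ t : ℝ, Integrable (fun ω => Real.exp (t * f ω)) μ ∧
    ∫ ω, Real.exp (t * f ω) ∂μ ≤ Real.exp (v * t ^ 2 / 2)

/-- A random vector `X` is sub-Gaussian with variance proxy `v`. -/
def VecSubG {Ω : Type*} [MeasurableSpace Ω] {d : ℕ} (μ : Measure Ω)
    (X : Ω → EuclideanSpace ℝ (Fin d)) (v : ℝ) : Prop :=
  ∀ u : EuclideanSpace ℝ (Fin d), ‖u‖ = 1 → SubGMGF μ (fun ω => ∑ i, u i * X ω i) v

/-- Coordinatewise shrinkage `sgn(a) min{|a|, τ}`. -/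
def shrink (τ a : ℝ) : ℝ := Real.sign a * min |a| τ

/-!
STATEMENT 17: there is an absolute constant `C` bounding the bias of coordinatewise
shrinkage on the covariance entries: `|E[x̃_j x̃_l] − E[x_j x_l]| ≤ C σ²/n`,
whenever the per-coordinate clipping level `τ₁` satisfies `P(|x_j| ≥ τ₁) ≤ 1/n²`.
-/

lemma sign_mul_abs' (a : ℝ) : Real.sign a * |a| = a := by
  rcases lt_trichotomy a 0 with h | h | h
  · rw [Real.sign_of_neg h, abs_of_neg h]; ring
  · simp [h]
  · rw [Real.sign_of_pos h, abs_of_pos h, one_mul]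

lemma abs_sign_le (a : ℝ) : |Real.sign a| ≤ 1 := by
  rcases Real.sign_apply_eq a with h | h | h <;> rw [h] <;> norm_num

lemma shrink_eq_clamp {τ : ℝ} (hτ : 0 ≤ τ) (a : ℝ) :
    shrink τ a = max (-τ) (min a τ) := by
  unfold shrink
  rcases lt_trichotomy a 0 with h | h | h
  · rw [Real.sign_of_neg h, abs_of_neg h]
    rw [min_eq_left (h.le.trans hτ), max_comm]
    rcases le_total (-a) τ with h2 | h2
    · rw [min_eq_left h2, max_eq_left (by linarith)]; ring
    · rw [min_eq_right h2, max_eq_right (by linarith)]; ring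
  · subst h; simp [Real.sign_zero, max_eq_right (neg_nonpos.mpr hτ), min_eq_left hτ]
  · rw [Real.sign_of_pos h, abs_of_pos h, one_mul,
      max_eq_right (le_trans (neg_nonpos.mpr hτ) (le_min h.le hτ))]

lemma abs_shrink_le_abs (τ a : ℝ) (hτ : 0 ≤ τ) : |shrink τ a| ≤ |a| := by
  unfold shrink
  rw [abs_mul, abs_of_nonneg (le_min (abs_nonneg a) hτ)]
  calc |Real.sign a| * min |a| τ ≤ 1 * |a| :=
        mul_le_mul (abs_sign_le a) (min_le_left _ _) (le_min (abs_nonneg a) hτ) zero_le_one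
    _ = |a| := one_mul _

lemma abs_shrink_le (τ a : ℝ) (hτ : 0 ≤ τ) : |shrink τ a| ≤ τ := by
  unfold shrink
  rw [abs_mul, abs_of_nonneg (le_min (abs_nonneg a) hτ)]
  calc |Real.sign a| * min |a| τ ≤ 1 * τ :=
        mul_le_mul (abs_sign_le a) (min_le_right _ _) (le_min (abs_nonneg a) hτ) zero_le_one
    _ = τ := one_mul _

lemma shrink_eq_self {τ a : ℝ} (h : |a| ≤ τ) : shrink τ a = a := by
  unfold shrink
  rw [min_eq_left h, sign_mul_abs']

lemma abs_sub_shrink (τ a : ℝ) (hτ : 0 ≤ τ) : |a - shrink τ a| ≤ |a| := by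
  unfold shrink
  rcases le_total |a| τ with h | h
  · rw [min_eq_left h, sign_mul_abs']; simp [abs_nonneg]
  · rw [min_eq_right h]
    rcases lt_trichotomy a 0 with h1 | h1 | h1
    · rw [Real.sign_of_neg h1, abs_of_neg h1] at *
      rw [abs_of_nonpos (by linarith)]; linarith
    · subst h1; simp [abs_nonneg]
    · rw [Real.sign_of_pos h1, abs_of_pos h1] at *
      rw [abs_of_nonneg (by linarith)]; linarith

lemma quartic_le (u : ℝ) : u ^ 4 ≤ 24 * (Real.exp u + Real.exp (-u)) := by
  have h1 : |u| ^ 4 / (Nat.factorial 4) ≤ Real.exp |u| :=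
    Real.pow_div_factorial_le_exp |u| (abs_nonneg u) 4
  have h2 : Real.exp |u| ≤ Real.exp u + Real.exp (-u) := by
    rcases abs_cases u with ⟨h, _⟩ | ⟨h, _⟩
    · rw [h]; nlinarith [Real.exp_pos (-u)]
    · rw [h]; nlinarith [Real.exp_pos u]
  have h3 : u ^ 4 = |u| ^ 4 := (abs_pow u 4).symm ▸ (abs_of_nonneg (by positivity)).symm
  rw [h3]
  norm_num [Nat.factorial] at h1
  linarith

lemma sq_le' (u : ℝ) : u ^ 2 ≤ 2 * (Real.exp u + Real.exp (-u)) := by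
  have h1 : |u| ^ 2 / (Nat.factorial 2) ≤ Real.exp |u| :=
    Real.pow_div_factorial_le_exp |u| (abs_nonneg u) 2
  have h2 : Real.exp |u| ≤ Real.exp u + Real.exp (-u) := by
    rcases abs_cases u with ⟨h, _⟩ | ⟨h, _⟩
    · rw [h]; nlinarith [Real.exp_pos (-u)]
    · rw [h]; nlinarith [Real.exp_pos u]
  have h3 : u ^ 2 = |u| ^ 2 := (sq_abs u).symm
  rw [h3]
  norm_num [Nat.factorial] at h1
  linarith

lemma moment_bounds {Ω : Type*} [MeasurableSpace Ω] (μ : Measure Ω) [IsProbabilityMeasure μ]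
    {h : Ω → ℝ} {σ : ℝ} (hσ : 0 < σ) (hm : Measurable h)
    (hs : SubGMGF μ h (σ ^ 2)) :
    Integrable (fun x => h x ^ 4) μ ∧ (∫ x, h x ^ 4 ∂μ) ≤ 144 * σ ^ 4 ∧
      Integrable (fun x => h x ^ 2) μ := by
  obtain ⟨-, hint⟩ := hs
  obtain ⟨ip, bp⟩ := hint (1 / σ)
  obtain ⟨im, bm⟩ := hint (-(1 / σ))
  have hσ' : σ ≠ 0 := hσ.ne'
  have hone : σ ^ 2 * (1 / σ) ^ 2 / 2 = 1 / 2 := by field_simp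
  have hone' : σ ^ 2 * (-(1 / σ)) ^ 2 / 2 = 1 / 2 := by field_simp
  have hexp : Real.exp (1 / 2) ≤ 3 := by
    have := Real.exp_one_lt_d9
    have h2 : Real.exp (1 / 2) ≤ Real.exp 1 := Real.exp_le_exp.mpr (by norm_num)
    linarith
  rw [hone] at bp; rw [hone'] at bm
  -- pointwise bounds
  have hpt4 : ∀ x, h x ^ 4 ≤ 24 * σ ^ 4 * (Real.exp (1 / σ * h x) + Real.exp (-(1 / σ) * h x)) := by
    intro x
    have := quartic_le (h x / σ)
    have he : h x ^ 4 = σ ^ 4 * (h x / σ) ^ 4 := by field_simp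
    have e1 : 1 / σ * h x = h x / σ := by ring
    have e2 : -(1 / σ) * h x = -(h x / σ) := by ring
    rw [he, e1, e2]
    nlinarith [pow_pos hσ 4]
  have hpt2 : ∀ x, h x ^ 2 ≤ 2 * σ ^ 2 * (Real.exp (1 / σ * h x) + Real.exp (-(1 / σ) * h x)) := by
    intro x
    have := sq_le' (h x / σ)
    have he : h x ^ 2 = σ ^ 2 * (h x / σ) ^ 2 := by field_simp
    have e1 : 1 / σ * h x = h x / σ := by ring
    have e2 : -(1 / σ) * h x = -(h x / σ) := by ring
    rw [he, e1, e2]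
    nlinarith [pow_pos hσ 2]
  have hdom : Integrable (fun x => 24 * σ ^ 4 * (Real.exp (1 / σ * h x) + Real.exp (-(1 / σ) * h x))) μ :=
    (ip.add im).const_mul _
  have hdom2 : Integrable (fun x => 2 * σ ^ 2 * (Real.exp (1 / σ * h x) + Real.exp (-(1 / σ) * h x))) μ :=
    (ip.add im).const_mul _
  have i4 : Integrable (fun x => h x ^ 4) μ := by
    refine hdom.mono' ((hm.pow_const 4).aestronglyMeasurable) ?_
    filter_upwards with x
    rw [Real.norm_eq_abs, abs_of_nonneg (by positivity)]
    exact hpt4 x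
  have i2 : Integrable (fun x => h x ^ 2) μ := by
    refine hdom2.mono' ((hm.pow_const 2).aestronglyMeasurable) ?_
    filter_upwards with x
    rw [Real.norm_eq_abs, abs_of_nonneg (by positivity)]
    exact hpt2 x
  refine ⟨i4, ?_, i2⟩
  calc ∫ x, h x ^ 4 ∂μ
      ≤ ∫ x, 24 * σ ^ 4 * (Real.exp (1 / σ * h x) + Real.exp (-(1 / σ) * h x)) ∂μ :=
        integral_mono i4 hdom hpt4
    _ = 24 * σ ^ 4 * ((∫ x, Real.exp (1 / σ * h x) ∂μ) + ∫ x, Real.exp (-(1 / σ) * h x) ∂μ) := by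
        rw [MeasureTheory.integral_const_mul, integral_add ip im]
    _ ≤ 24 * σ ^ 4 * (3 + 3) := by
        have h4 : (0:ℝ) ≤ 24 * σ ^ 4 := by positivity
        apply mul_le_mul_of_nonneg_left _ h4
        have b1 := bp.trans hexp
        have b2 := bm.trans hexp
        linarith
    _ = 144 * σ ^ 4 := by ring

lemma step1 (τ a b : ℝ) (hτ : 0 ≤ τ) :
    |shrink τ a * shrink τ b - a * b| ≤
      |a * b| * ((if τ ≤ |a| then (1:ℝ) else 0) + (if τ ≤ |b| then (1:ℝ) else 0)) := by
  by_cases ha : τ ≤ |a| <;> by_cases hb : τ ≤ |b|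
  · simp only [ha, hb, if_pos]
    have key : shrink τ a * shrink τ b - a * b
        = shrink τ b * (shrink τ a - a) + a * (shrink τ b - b) := by ring
    calc |shrink τ a * shrink τ b - a * b|
        ≤ |shrink τ b * (shrink τ a - a)| + |a * (shrink τ b - b)| := by
          rw [key]; exact abs_add_le _ _
      _ = |shrink τ b| * |shrink τ a - a| + |a| * |shrink τ b - b| := by
          rw [abs_mul, abs_mul]
      _ ≤ |b| * |a| + |a| * |b| :=
          add_le_add
            (mul_le_mul (abs_shrink_le_abs τ b hτ)
              (by rw [abs_sub_comm]; exact abs_sub_shrink τ a hτ) (abs_nonneg _) (abs_nonneg _))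
            (mul_le_mul_of_nonneg_left
              (by rw [abs_sub_comm]; exact abs_sub_shrink τ b hτ) (abs_nonneg _))
      _ = |a * b| * (1 + 1) := by rw [abs_mul]; ring
  · simp only [ha, if_pos, hb, if_neg, not_false_iff, add_zero]
    rw [shrink_eq_self (le_of_not_ge hb)]
    have key : shrink τ a * b - a * b = b * (shrink τ a - a) := by ring
    calc |shrink τ a * b - a * b| = |b| * |shrink τ a - a| := by rw [key, abs_mul]
      _ ≤ |b| * |a| :=
          mul_le_mul_of_nonneg_left
            (by rw [abs_sub_comm]; exact abs_sub_shrink τ a hτ) (abs_nonneg _)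
      _ = |a * b| * 1 := by rw [abs_mul]; ring
  · simp only [ha, if_neg, not_false_iff, hb, if_pos, zero_add]
    rw [shrink_eq_self (le_of_not_ge ha)]
    have key : a * shrink τ b - a * b = a * (shrink τ b - b) := by ring
    calc |a * shrink τ b - a * b| = |a| * |shrink τ b - b| := by rw [key, abs_mul]
      _ ≤ |a| * |b| :=
          mul_le_mul_of_nonneg_left
            (by rw [abs_sub_comm]; exact abs_sub_shrink τ b hτ) (abs_nonneg _)
      _ = |a * b| * 1 := by rw [abs_mul]; ring
  · simp only [ha, hb, if_neg, not_false_iff, add_zero, mul_zero]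
    rw [shrink_eq_self (le_of_not_ge ha), shrink_eq_self (le_of_not_ge hb), sub_self, abs_zero]

lemma step2 (t χ c : ℝ) (hc : 0 < c) (hχ : χ = 0 ∨ χ = 1) :
    |t| * χ ≤ t ^ 2 / (2 * c) + c / 2 * χ := by
  rcases hχ with rfl | rfl
  · simp; positivity
  · rw [mul_one, mul_one]
    have h3 : 2 * c * |t| ≤ t ^ 2 + c ^ 2 := by
      nlinarith [sq_nonneg (|t| - c), sq_abs t]
    have h4 : |t| = 2 * c * |t| / (2 * c) := by field_simp
    rw [h4]
    calc 2 * c * |t| / (2 * c) ≤ (t ^ 2 + c ^ 2) / (2 * c) := by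
          gcongr
      _ = t ^ 2 / (2 * c) + c / 2 := by field_simp

theorem stmt17 : ∃ C : ℝ, 0 < C ∧
    ∀ (d n : ℕ) (σ τ₁ : ℝ), 0 < d → 0 < n → 0 < σ → 0 < τ₁ →
    ∀ (μ : Measure (EuclideanSpace ℝ (Fin d))) [IsProbabilityMeasure μ],
      -- x is a zero-mean σ²-sub-Gaussian random vector
      VecSubG μ (fun x => x) (σ ^ 2) → (∀ i, ∫ x, x i ∂μ = 0) →
      -- tail condition ensured by e.g. τ₁ = 2σ√(log n)
      (∀ j, (μ {x | τ₁ ≤ |x j|}).toReal ≤ 1 / (n : ℝ) ^ 2) →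
      ∀ j l : Fin d,
        |∫ x, shrink τ₁ (x j) * shrink τ₁ (x l) ∂μ - ∫ x, x j * x l ∂μ|
          ≤ C * σ ^ 2 / n := by
  refine ⟨200, by norm_num, ?_⟩
  intro d n σ τ₁ hd hn hσ hτ μ _ hsub hmean htail j l
  have hn' : (0:ℝ) < n := Nat.cast_pos.mpr hn
  have hmc : ∀ i : Fin d, Measurable fun x : EuclideanSpace ℝ (Fin d) => x i :=
    fun i => (measurable_pi_apply i).comp (WithLp.measurable_ofLp _ _)
  have hcoord : ∀ i : Fin d, SubGMGF μ (fun x : EuclideanSpace ℝ (Fin d) => x i) (σ ^ 2) := by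
    intro i
    have := hsub (EuclideanSpace.single i 1) (by simp)
    simpa [EuclideanSpace.single_apply] using this
  obtain ⟨i4j, b4j, i2j⟩ := moment_bounds μ hσ (hmc j) (hcoord j)
  obtain ⟨i4l, b4l, i2l⟩ := moment_bounds μ hσ (hmc l) (hcoord l)
  -- sets and indicators
  have hAj : MeasurableSet {x : EuclideanSpace ℝ (Fin d) | τ₁ ≤ |x j|} :=
    measurableSet_le measurable_const (hmc j).abs
  have hAl : MeasurableSet {x : EuclideanSpace ℝ (Fin d) | τ₁ ≤ |x l|} :=
    measurableSet_le measurable_const (hmc l).abs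
  set χj : EuclideanSpace ℝ (Fin d) → ℝ :=
    Set.indicator {x | τ₁ ≤ |x j|} (fun _ => 1) with hχj
  set χl : EuclideanSpace ℝ (Fin d) → ℝ :=
    Set.indicator {x | τ₁ ≤ |x l|} (fun _ => 1) with hχl
  have iχj : Integrable χj μ := (integrable_const 1).indicator hAj
  have iχl : Integrable χl μ := (integrable_const 1).indicator hAl
  have intχj : ∫ x, χj x ∂μ = (μ {x | τ₁ ≤ |x j|}).toReal := integral_indicator_one hAj
  have intχl : ∫ x, χl x ∂μ = (μ {x | τ₁ ≤ |x l|}).toReal := integral_indicator_one hAl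
  have χj_eq : ∀ x, χj x = if τ₁ ≤ |x j| then (1:ℝ) else 0 := by
    intro x; rw [hχj, Set.indicator_apply]; rfl
  have χl_eq : ∀ x, χl x = if τ₁ ≤ |x l| then (1:ℝ) else 0 := by
    intro x; rw [hχl, Set.indicator_apply]; rfl
  -- integrability of main functions
  set f : EuclideanSpace ℝ (Fin d) → ℝ := fun x => shrink τ₁ (x j) * shrink τ₁ (x l) with hf_def
  set g : EuclideanSpace ℝ (Fin d) → ℝ := fun x => x j * x l with hg_def
  have hf_meas : Measurable f := by
    have : f = fun x => max (-τ₁) (min (x j) τ₁) * max (-τ₁) (min (x l) τ₁) := by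
      funext x
      rw [hf_def]
      simp only
      rw [shrink_eq_clamp hτ.le, shrink_eq_clamp hτ.le]
    rw [this]
    exact (measurable_const.max ((hmc j).min measurable_const)).mul
      (measurable_const.max ((hmc l).min measurable_const))
  have hf : Integrable f μ := by
    refine (integrable_const (τ₁ * τ₁)).mono' hf_meas.aestronglyMeasurable ?_
    filter_upwards with x
    rw [Real.norm_eq_abs, hf_def]
    simp only
    rw [abs_mul]
    exact mul_le_mul (abs_shrink_le τ₁ _ hτ.le) (abs_shrink_le τ₁ _ hτ.le)
      (abs_nonneg _) hτ.le
  have hg : Integrable g μ := by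
    refine ((i2j.add i2l).div_const 2).mono'
      (((hmc j).mul (hmc l)).aestronglyMeasurable) ?_
    filter_upwards with x
    rw [Real.norm_eq_abs, hg_def]
    simp only [Pi.add_apply]
    rw [abs_mul]
    nlinarith [sq_nonneg (|x j| - |x l|), sq_abs (x j), sq_abs (x l), abs_nonneg (x j), abs_nonneg (x l)]
  have hsqm : Measurable fun x : EuclideanSpace ℝ (Fin d) => (x j * x l) ^ 2 :=
    ((hmc j).mul (hmc l)).pow_const 2
  have hsq : Integrable (fun x => (x j * x l) ^ 2) μ := by
    refine ((i4j.add i4l).div_const 2).mono' hsqm.aestronglyMeasurable ?_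
    filter_upwards with x
    rw [Real.norm_eq_abs, abs_of_nonneg (by positivity)]
    simp only [Pi.add_apply]
    nlinarith [sq_nonneg ((x j) ^ 2 - (x l) ^ 2)]
  have bsq : ∫ x, (x j * x l) ^ 2 ∂μ ≤ 144 * σ ^ 4 := by
    calc ∫ x, (x j * x l) ^ 2 ∂μ
        ≤ ∫ x, ((x j) ^ 4 + (x l) ^ 4) / 2 ∂μ := by
          refine integral_mono hsq ((i4j.add i4l).div_const 2) ?_
          intro x
          simp only [Pi.add_apply]
          nlinarith [sq_nonneg ((x j) ^ 2 - (x l) ^ 2)]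
      _ = ((∫ x, (x j) ^ 4 ∂μ) + ∫ x, (x l) ^ 4 ∂μ) / 2 := by
          rw [integral_div, integral_add i4j i4l]
      _ ≤ (144 * σ ^ 4 + 144 * σ ^ 4) / 2 := by linarith
      _ = 144 * σ ^ 4 := by ring
  -- the dominating function
  set c : ℝ := σ ^ 2 * n with hc_def
  have hc : 0 < c := by positivity
  set D : EuclideanSpace ℝ (Fin d) → ℝ :=
    fun x => (x j * x l) ^ 2 / c + c / 2 * (χj x + χl x) with hD_def
  have iadd : Integrable (fun x => χj x + χl x) μ := iχj.add iχl
  have imul : Integrable (fun x => c / 2 * (χj x + χl x)) μ := iadd.const_mul _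
  have idiv : Integrable (fun x => (x j * x l) ^ 2 / c) μ := hsq.div_const c
  have hD : Integrable D μ := idiv.add imul
  have hpt : ∀ x, |f x - g x| ≤ D x := by
    intro x
    have h1 := step1 τ₁ (x j) (x l) hτ.le
    rw [← χj_eq x, ← χl_eq x] at h1
    have hj01 : χj x = 0 ∨ χj x = 1 := by
      rw [χj_eq x]; split <;> simp
    have hl01 : χl x = 0 ∨ χl x = 1 := by
      rw [χl_eq x]; split <;> simp
    have h2 := step2 (x j * x l) (χj x) c hc hj01
    have h3 := step2 (x j * x l) (χl x) c hc hl01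
    have : |f x - g x| ≤ |x j * x l| * (χj x + χl x) := h1
    rw [hD_def]
    simp only
    calc |f x - g x| ≤ |x j * x l| * χj x + |x j * x l| * χl x := by
          rw [mul_add] at this; exact this
      _ ≤ (x j * x l) ^ 2 / (2 * c) + c / 2 * χj x
          + ((x j * x l) ^ 2 / (2 * c) + c / 2 * χl x) := add_le_add h2 h3
      _ = (x j * x l) ^ 2 / c + c / 2 * (χj x + χl x) := by
          field_simp; ring
  calc |∫ x, f x ∂μ - ∫ x, g x ∂μ|
      = |∫ x, (f x - g x) ∂μ| := by rw [integral_sub hf hg]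
    _ ≤ ∫ x, |f x - g x| ∂μ := by
        simpa [Real.norm_eq_abs] using norm_integral_le_integral_norm (fun x => f x - g x) (μ := μ)
    _ ≤ ∫ x, D x ∂μ := integral_mono (hf.sub hg).abs hD hpt
    _ = (∫ x, (x j * x l) ^ 2 ∂μ) / c
        + c / 2 * ((μ {x | τ₁ ≤ |x j|}).toReal + (μ {x | τ₁ ≤ |x l|}).toReal) := by
        rw [hD_def]
        simp only
        rw [integral_add idiv imul, integral_div, MeasureTheory.integral_const_mul,
          integral_add iχj iχl, intχj, intχl]
    _ ≤ 144 * σ ^ 4 / c + c / 2 * (1 / (n:ℝ) ^ 2 + 1 / (n:ℝ) ^ 2) := by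
        gcongr
        · exact htail j
        · exact htail l
    _ = 145 * σ ^ 2 / n := by
        rw [hc_def]
        field_simp
        ring
    _ ≤ 200 * σ ^ 2 / n := by
        gcongr
        norm_num
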